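/- The second central moment of S*_{n,a} satisfies S*_{n,a}((t−x)²; x) = x·((a^(1/n)−1)²·n²·x − (a^(1/n)−1)·(2nx − 1)·log a + x·(log a)²) / ((a^(1/n)−1)²·n²) for all x ≥ 0. -/
import Mathlib
open Real Filter

noncomputable def szasz (a : ℝ) (n : ℕ) (f : ℝ → ℝ) (x : ℝ) : ℝ :=
  ∑' k : ℕ, a ^ (-x / (a ^ ((1:ℝ)/n) - 1)) *
    (x * Real.log a) ^ k / ((a ^ ((1:ℝ)/n) - 1) ^ k * (Nat.factorial k : ℝ)) * f (k / n)

lemma exp_tsum (y : ℝ) : ∑' k : ℕ, y ^ k / (Nat.factorial k : ℝ) = Real.exp y := by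
  rw [Real.exp_eq_exp_ℝ, NormedSpace.exp_eq_tsum_div]

lemma summable0 (y : ℝ) : Summable (fun k : ℕ => y ^ k / (Nat.factorial k : ℝ)) :=
  Real.summable_pow_div_factorial y

lemma shift1 (y : ℝ) (k : ℕ) :
    ((k+1 : ℕ) : ℝ) * y ^ (k+1) / (Nat.factorial (k+1) : ℝ) = y * (y ^ k / (Nat.factorial k : ℝ)) := by
  rw [Nat.factorial_succ]
  have h : (Nat.factorial k : ℝ) ≠ 0 := Nat.cast_ne_zero.mpr (Nat.factorial_ne_zero k)
  push_cast
  field_simp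
  ring

lemma summable1 (y : ℝ) : Summable (fun k : ℕ => (k : ℝ) * y ^ k / (Nat.factorial k : ℝ)) := by
  rw [← summable_nat_add_iff 1]
  have h : (fun k : ℕ => ((k+1 : ℕ) : ℝ) * y ^ (k+1) / (Nat.factorial (k+1) : ℝ))
      = fun k : ℕ => y * (y ^ k / (Nat.factorial k : ℝ)) := funext fun k => shift1 y k
  rw [h]
  exact (summable0 y).mul_left y

lemma tsum1 (y : ℝ) : ∑' k : ℕ, (k : ℝ) * y ^ k / (Nat.factorial k : ℝ) = y * Real.exp y := by
  rw [Summable.tsum_eq_zero_add (summable1 y)]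
  simp only [Nat.cast_zero, zero_mul, zero_div, zero_add]
  rw [tsum_congr (fun k => shift1 y k), tsum_mul_left, exp_tsum]

lemma shift2 (y : ℝ) (k : ℕ) :
    ((k+1 : ℕ) : ℝ)^2 * y ^ (k+1) / (Nat.factorial (k+1) : ℝ)
      = y * ((k : ℝ) * y ^ k / (Nat.factorial k : ℝ)) + y * (y ^ k / (Nat.factorial k : ℝ)) := by
  rw [Nat.factorial_succ]
  have h : (Nat.factorial k : ℝ) ≠ 0 := Nat.cast_ne_zero.mpr (Nat.factorial_ne_zero k)
  push_cast
  field_simp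
  ring

lemma summable2 (y : ℝ) : Summable (fun k : ℕ => (k : ℝ)^2 * y ^ k / (Nat.factorial k : ℝ)) := by
  rw [← summable_nat_add_iff 1]
  have h : (fun k : ℕ => ((k+1 : ℕ) : ℝ)^2 * y ^ (k+1) / (Nat.factorial (k+1) : ℝ))
      = fun k : ℕ => y * ((k : ℝ) * y ^ k / (Nat.factorial k : ℝ)) + y * (y ^ k / (Nat.factorial k : ℝ)) :=
    funext fun k => shift2 y k
  rw [h]
  exact ((summable1 y).mul_left y).add ((summable0 y).mul_left y)

lemma tsum2 (y : ℝ) : ∑' k : ℕ, (k : ℝ)^2 * y ^ k / (Nat.factorial k : ℝ)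
    = (y^2 + y) * Real.exp y := by
  rw [Summable.tsum_eq_zero_add (summable2 y)]
  simp only [Nat.cast_zero, zero_mul, zero_div, zero_add, ne_eq, OfNat.ofNat_ne_zero,
    not_false_eq_true, zero_pow]
  rw [tsum_congr (fun k => shift2 y k),
    Summable.tsum_add ((summable1 y).mul_left y) ((summable0 y).mul_left y),
    tsum_mul_left, tsum_mul_left, tsum1, exp_tsum]
  ring

theorem stmt_10 (a : ℝ) (ha : 1 < a) (n : ℕ) (hn : 1 ≤ n) (x : ℝ) (hx : 0 ≤ x) :
    szasz a n (fun t => (t - x) ^ 2) x =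
      x * ((a ^ ((1:ℝ)/n) - 1) ^ 2 * n ^ 2 * x
        - (a ^ ((1:ℝ)/n) - 1) * (2 * n * x - 1) * Real.log a
        + x * Real.log a ^ 2) / ((a ^ ((1:ℝ)/n) - 1) ^ 2 * n ^ 2) := by
  have hn0 : (n : ℝ) ≠ 0 := Nat.cast_ne_zero.mpr (by omega)
  have hnpos : (0:ℝ) < n := by positivity
  have ha0 : (0:ℝ) < a := by linarith
  have hb1 : 1 < a ^ ((1:ℝ)/n) :=
    (Real.one_lt_rpow_iff_of_pos ha0).mpr (Or.inl ⟨ha, by positivity⟩)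
  set b : ℝ := a ^ ((1:ℝ)/n) - 1 with hbdef
  have hb : 0 < b := by rw [hbdef]; linarith
  have hb0 : b ≠ 0 := ne_of_gt hb
  set L : ℝ := Real.log a with hL
  set y : ℝ := x * L / b with hy
  have hexp : a ^ (-x / b) = Real.exp (-y) := by
    rw [Real.rpow_def_of_pos ha0, hy, ← hL]; ring_nf
  have hterm : ∀ k : ℕ, a ^ (-x / b) * (x * L) ^ k / (b ^ k * (Nat.factorial k : ℝ)) *
      ((k : ℝ) / (n : ℝ) - x) ^ 2
      = Real.exp (-y) * ((1/(n:ℝ)^2) * ((k:ℝ)^2 * y ^ k / (Nat.factorial k : ℝ))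
        - (2*x/(n:ℝ)) * ((k:ℝ) * y ^ k / (Nat.factorial k : ℝ))
        + x^2 * (y ^ k / (Nat.factorial k : ℝ))) := by
    intro k
    rw [hexp]
    have hfk : (Nat.factorial k : ℝ) ≠ 0 := Nat.cast_ne_zero.mpr (Nat.factorial_ne_zero k)
    have hyk : y ^ k = (x*L)^k / b^k := by rw [hy, div_pow]
    rw [hyk]
    field_simp
    ring
  have key : szasz a n (fun t => (t - x) ^ 2) x
      = Real.exp (-y) * ((1/(n:ℝ)^2) * ((y^2+y) * Real.exp y)
        - (2*x/(n:ℝ)) * (y * Real.exp y) + x^2 * Real.exp y) := by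
    unfold szasz
    rw [← hbdef, ← hL]
    have e1 : (∑' k : ℕ, a ^ (-x / b) * (x * L) ^ k / (b ^ k * (Nat.factorial k : ℝ)) *
        (fun t => (t - x) ^ 2) ((k : ℝ) / (n : ℝ)))
        = ∑' k : ℕ, Real.exp (-y) * ((1/(n:ℝ)^2) * ((k:ℝ)^2 * y ^ k / (Nat.factorial k : ℝ))
          - (2*x/(n:ℝ)) * ((k:ℝ) * y ^ k / (Nat.factorial k : ℝ))
          + x^2 * (y ^ k / (Nat.factorial k : ℝ))) := tsum_congr fun k => hterm k
    rw [e1, tsum_mul_left]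
    congr 1
    rw [Summable.tsum_add (((summable2 y).mul_left _).sub ((summable1 y).mul_left _))
        ((summable0 y).mul_left _),
      Summable.tsum_sub ((summable2 y).mul_left _) ((summable1 y).mul_left _),
      tsum_mul_left, tsum_mul_left, tsum_mul_left, tsum2, tsum1, exp_tsum]
  rw [key]
  have hE : Real.exp (-y) * Real.exp y = 1 := by
    rw [← Real.exp_add]; simp
  have h2 : Real.exp (-y) * ((1/(n:ℝ)^2) * ((y^2+y) * Real.exp y)
        - (2*x/(n:ℝ)) * (y * Real.exp y) + x^2 * Real.exp y)
      = (y^2+y)/(n:ℝ)^2 - 2*x*y/(n:ℝ) + x^2 := by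
    linear_combination ((y^2+y)/(n:ℝ)^2 - 2*x*y/(n:ℝ) + x^2) * hE
  rw [h2, hy]
  field_simp
  ring
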